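/- For every α ∈ ℂ, the algebra 𝔠₈₀(α) on ℂ⁵ with nonzero basis products e₁e₁ = e₂, e₁e₂ = e₃, e₁e₃ = α e₄, e₁e₄ = e₅, e₂e₂ = (α+1)e₄, e₂e₃ = (α+3)e₅ is a nilpotent commutative algebra (A⁶ = 0) that satisfies the almost-Jordan identity 2·(((y·x)·x)·x) + y·((x·x)·x) = 3·((y·(x·x))·x) for all x, y, but does not satisfy the Jordan identity: there exist x, y with ((x·x)·y)·x ≠ (x·x)·(y·x). -/
import Mathlib

set_option maxHeartbeats 1000000


/-- `IsProdOf μ n z` says that `z` is a product of `n` elements under the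
multiplication `μ`, with some arrangement of parentheses. -/
inductive IsProdOf {V : Type*} (μ : V → V → V) : ℕ → V → Prop
  | base (x : V) : IsProdOf μ 1 x
  | mul {m n : ℕ} {a b : V} :
      IsProdOf μ m a → IsProdOf μ n b → IsProdOf μ (m + n) (μ a b)

/-- Structure constants of the algebra 𝔠₈₀(α) (e₁e₁ = e₂, e₁e₂ = e₃, e₁e₃ = α e₄, e₁e₄ = e₅, e₂e₂ = (α+1)e₄, e₂e₃ = (α+3)e₅) on ℂ⁵ (basis `e₁, …, e₅` indexed by `Fin 5`),
extended symmetrically; unlisted products of basis vectors are zero. -/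
noncomputable def tbl80 (α : ℂ) : Fin 5 → Fin 5 → Fin 5 → ℂ :=
  ![![![0,1,0,0,0], ![0,0,1,0,0], ![0,0,0,α,0], ![0,0,0,0,1], 0],
    ![![0,0,1,0,0], ![0,0,0,α+1,0], ![0,0,0,0,α+3], 0, 0],
    ![![0,0,0,α,0], ![0,0,0,0,α+3], 0, 0, 0],
    ![![0,0,0,0,1], 0, 0, 0, 0],
    0]

/-- The bilinear multiplication of the algebra on ℂ⁵. -/
noncomputable def mul80 (α : ℂ) (x y : Fin 5 → ℂ) : Fin 5 → ℂ :=
  fun k => ∑ i, ∑ j, x i * y j * tbl80 α i j k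

lemma tbl80_eq_zero (α : ℂ) (i j k : Fin 5) (h : (k : ℕ) ≠ (i : ℕ) + (j : ℕ) + 1) :
    tbl80 α i j k = 0 := by
  fin_cases i <;> fin_cases j <;> fin_cases k <;>
    simp [tbl80, Matrix.vecHead, Matrix.vecTail] <;> simp at h

/-- weight filtration: `x` lies in level `n` if its components below weight `n` vanish. -/
def lvl80 (n : ℕ) (x : Fin 5 → ℂ) : Prop := ∀ k : Fin 5, (k : ℕ) + 1 < n → x k = 0

lemma lvl80_mul (α : ℂ) {m n : ℕ} {a b : Fin 5 → ℂ} (ha : lvl80 m a) (hb : lvl80 n b) :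
    lvl80 (m + n) (mul80 α a b) := by
  intro k hk
  unfold mul80
  refine Finset.sum_eq_zero fun i _ => Finset.sum_eq_zero fun j _ => ?_
  by_cases hi : (i : ℕ) + 1 < m
  · simp [ha i hi]
  by_cases hj : (j : ℕ) + 1 < n
  · simp [hb j hj]
  · rw [tbl80_eq_zero α i j k (by omega)]
    ring

lemma lvl80_prod (α : ℂ) {n : ℕ} {z : Fin 5 → ℂ} (h : IsProdOf (mul80 α) n z) :
    lvl80 n z := by
  induction h with
  | base x => intro k hk; omega
  | mul ha hb iha ihb => exact lvl80_mul α iha ihb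

lemma mul80_eq (α : ℂ) (x y : Fin 5 → ℂ) :
    mul80 α x y =
      ![0, x 0 * y 0,
        x 0 * y 1 + x 1 * y 0,
        α * (x 0 * y 2 + x 2 * y 0) + (α+1) * (x 1 * y 1),
        x 0 * y 3 + x 3 * y 0 + (α+3) * (x 1 * y 2 + x 2 * y 1)] := by
  funext k
  unfold mul80
  fin_cases k <;>
    simp [tbl80, Fin.sum_univ_five, Matrix.vecHead, Matrix.vecTail] <;> ring

/-- The algebra is nilpotent (A⁶ = 0), commutative, satisfies the almost-Jordan identity, but does not satisfy the Jordan identity. -/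
theorem c80_properties (α : ℂ) :
    (∀ x y : Fin 5 → ℂ, mul80 α x y = mul80 α y x) ∧
    (∀ z : Fin 5 → ℂ, IsProdOf (mul80 α) 6 z → z = 0) ∧
    (∀ x y : Fin 5 → ℂ,
        (2 : ℂ) • mul80 α (mul80 α (mul80 α y x) x) x + mul80 α y (mul80 α (mul80 α x x) x) =
          (3 : ℂ) • mul80 α (mul80 α y (mul80 α x x)) x) ∧
    (∃ x y : Fin 5 → ℂ,
        mul80 α (mul80 α (mul80 α x x) y) x ≠ mul80 α (mul80 α x x) (mul80 α y x)) := by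
  refine ⟨?_, ?_, ?_, ?_⟩
  · intro x y
    funext k
    unfold mul80
    rw [Finset.sum_comm]
    refine Finset.sum_congr rfl fun i _ => Finset.sum_congr rfl fun j _ => ?_
    have : tbl80 α j i k = tbl80 α i j k := by
      fin_cases i <;> fin_cases j <;> simp [tbl80, Matrix.vecHead, Matrix.vecTail]
    rw [this]; ring
  · intro z hz
    funext k
    have := lvl80_prod α hz k (by omega)
    simpa using this
  · intro x y
    funext k
    fin_cases k <;>
      simp [mul80_eq, Pi.smul_apply, Pi.add_apply, smul_eq_mul, Matrix.vecHead,
        Matrix.vecTail] <;>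
      ring
  · refine ⟨![1,0,0,0,0], ![0,1,0,0,0], fun h => ?_⟩
    have h4 := congrFun h 4
    simp [mul80_eq, Matrix.vecHead, Matrix.vecTail] at h4
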